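/- Define g_λ(x) = (βγ−1)·x·log(λ/x) / ((βx+1)(x+γ)·log((x+γ)/(βx+1))) for 0 < x ≤ λ, with βγ > 1, β ≤ γ, λ < λ_c. Then there exists α < 1 such that g_λ(x) ≤ α for all x ∈ (0, λ]. -/

import Mathlib

open Real Set

lemma my_le_of_deriv_nonneg {f f' : ℝ → ℝ} {a b : ℝ} (hab : a ≤ b)
    (hd : ∀ y ∈ Set.Icc a b, HasDerivAt f (f' y) y)
    (h0 : ∀ y ∈ Set.Icc a b, 0 ≤ f' y) : f a ≤ f b := by
  have hmono : MonotoneOn f (Set.Icc a b) := by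
    apply monotoneOn_of_deriv_nonneg (convex_Icc a b)
    · exact fun y hy => (hd y hy).continuousAt.continuousWithinAt
    · intro y hy
      rw [interior_Icc] at hy
      exact ((hd y (Ioo_subset_Icc_self hy)).differentiableAt).differentiableWithinAt
    · intro y hy
      rw [interior_Icc] at hy
      rw [(hd y (Ioo_subset_Icc_self hy)).deriv]
      exact h0 y (Ioo_subset_Icc_self hy)
  exact hmono (Set.left_mem_Icc.2 hab) (Set.right_mem_Icc.2 hab) hab

lemma my_le_of_deriv_nonpos {f f' : ℝ → ℝ} {a b : ℝ} (hab : a ≤ b)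
    (hd : ∀ y ∈ Set.Icc a b, HasDerivAt f (f' y) y)
    (h0 : ∀ y ∈ Set.Icc a b, f' y ≤ 0) : f b ≤ f a := by
  have hmono : AntitoneOn f (Set.Icc a b) := by
    apply antitoneOn_of_deriv_nonpos (convex_Icc a b)
    · exact fun y hy => (hd y hy).continuousAt.continuousWithinAt
    · intro y hy
      rw [interior_Icc] at hy
      exact ((hd y (Ioo_subset_Icc_self hy)).differentiableAt).differentiableWithinAt
    · intro y hy
      rw [interior_Icc] at hy
      rw [(hd y (Ioo_subset_Icc_self hy)).deriv]
      exact h0 y (Ioo_subset_Icc_self hy)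
  exact hmono (Set.left_mem_Icc.2 hab) (Set.right_mem_Icc.2 hab) hab
lemma aux_h (s : ℝ) (hs : 1 < s) (t : ℝ) (ht : 1 ≤ t) :
    0 ≤ s*t - 1 - s * t ^ ((s+1)/(s-1)) + t ^ ((s+1)/(s-1) + 1) := by
  set r : ℝ := (s+1)/(s-1) with hrdef
  have hs1 : (0:ℝ) < s - 1 := by linarith
  have hr1 : 1 < r := by
    rw [hrdef, lt_div_iff₀ hs1]; linarith
  have hkey : r + 1 = s * (r - 1) := by
    rw [hrdef]; field_simp; ring
  -- derivative functions
  set g : ℝ → ℝ := fun t => s*t - 1 - s * t ^ r + t ^ (r+1) with hgdef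
  set g' : ℝ → ℝ := fun t => s - s * (r * t ^ (r-1)) + (r+1) * t ^ r with hg'def
  set g'' : ℝ → ℝ := fun t => - (s * (r * ((r-1) * t ^ (r-1-1)))) + (r+1) * (r * t ^ (r-1)) with hg''def
  have hdg : ∀ y : ℝ, 0 < y → HasDerivAt g (g' y) y := by
    intro y hy
    have h1 : HasDerivAt (fun t : ℝ => t ^ r) (r * y ^ (r-1)) y :=
      Real.hasDerivAt_rpow_const (Or.inl hy.ne')
    have h2 : HasDerivAt (fun t : ℝ => t ^ (r+1)) ((r+1) * y ^ (r+1-1)) y :=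
      Real.hasDerivAt_rpow_const (Or.inl hy.ne')
    have h3 : HasDerivAt (fun t : ℝ => s*t - 1) s y := by
      simpa using ((hasDerivAt_id y).const_mul s).sub_const 1
    have := (h3.sub (h1.const_mul s)).add h2
    exact this.congr_deriv (by simp only [hg'def]; rw [add_sub_cancel_right])
  have hdg' : ∀ y : ℝ, 0 < y → HasDerivAt g' (g'' y) y := by
    intro y hy
    have h1 : HasDerivAt (fun t : ℝ => t ^ (r-1)) ((r-1) * y ^ (r-1-1)) y :=
      Real.hasDerivAt_rpow_const (Or.inl hy.ne')
    have h2 : HasDerivAt (fun t : ℝ => t ^ r) (r * y ^ (r-1)) y :=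
      Real.hasDerivAt_rpow_const (Or.inl hy.ne')
    have h3 := ((h1.const_mul r).const_mul s)
    have := ((hasDerivAt_const y s).sub h3).add (h2.const_mul (r+1))
    exact this.congr_deriv (by simp only [hg''def]; ring)
  -- g' 1 = 0
  have hg'1 : g' 1 = 0 := by
    simp [hg'def, Real.one_rpow]
    nlinarith [hkey]
  -- g'' ≥ 0 on [1, t]
  have hg''nonneg : ∀ y : ℝ, 1 ≤ y → 0 ≤ g'' y := by
    intro y hy
    have hy0 : (0:ℝ) < y := by linarith
    have e1 : y ^ (r-1) = y ^ (r-1-1) * y := by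
      rw [← Real.rpow_add_one hy0.ne' (r-1-1)]; ring_nf
    have hp : (0:ℝ) ≤ y ^ (r-1-1) := Real.rpow_nonneg hy0.le _
    have : g'' y = r * y ^ (r-1-1) * ((r+1) * y - s * (r-1)) := by
      rw [hg''def]; simp only []; rw [e1]; ring
    rw [this, ← hkey]
    have h4 : (0:ℝ) ≤ (r+1) * y - (r+1) := by nlinarith
    have hr0 : (0:ℝ) ≤ r := by linarith
    exact mul_nonneg (mul_nonneg hr0 hp) h4
  -- g' ≥ 0 on [1, ∞)
  have hg'nonneg : ∀ y : ℝ, 1 ≤ y → 0 ≤ g' y := by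
    intro y hy
    have : g' 1 ≤ g' y := by
      apply my_le_of_deriv_nonneg hy
      · intro z hz; exact hdg' z (by linarith [hz.1])
      · intro z hz; exact hg''nonneg z hz.1
    rw [hg'1] at this; exact this
  -- g 1 = 0
  have hg1 : g 1 = 0 := by simp [hgdef, Real.one_rpow]
  have : g 1 ≤ g t := by
    apply my_le_of_deriv_nonneg ht
    · intro z hz; exact hdg z (by linarith [hz.1])
    · intro z hz; exact hg'nonneg z hz.1
  rw [hg1] at this
  simpa [hgdef] using this
lemma cross (β γ : ℝ) (hβ : 0 < β) (hγ : 0 < γ) (h1 : 1 < β * γ) (hle : β ≤ γ) (hβ1 : 1 < β) :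
    (γ/β) ^ (Real.sqrt (β*γ)/(Real.sqrt (β*γ)-1)) * (β - 1) ≤ γ - 1 := by
  set s : ℝ := Real.sqrt (β*γ) with hsdef
  set t : ℝ := Real.sqrt (γ/β) with htdef
  have hbγ : (0:ℝ) < β*γ := by positivity
  have hdivpos : (0:ℝ) < γ/β := by positivity
  have hs2 : s^2 = β*γ := Real.sq_sqrt hbγ.le
  have ht2 : t^2 = γ/β := Real.sq_sqrt hdivpos.le
  have hs0 : 0 < s := Real.sqrt_pos.2 hbγ
  have ht0 : 0 < t := Real.sqrt_pos.2 hdivpos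
  have hs1 : 1 < s := by nlinarith [hs2]
  have hod : (1:ℝ) ≤ γ/β := (one_le_div hβ).2 hle
  have ht1 : 1 ≤ t := by nlinarith [ht2, ht0]
  have hst : t * s = γ := by
    rw [htdef, hsdef, ← Real.sqrt_mul hdivpos.le]
    rw [show γ/β*(β*γ) = γ^2 by field_simp]
    exact Real.sqrt_sq hγ.le
  have hβt : β * t = s := by
    rw [htdef, hsdef, show β = Real.sqrt (β^2) from (Real.sqrt_sq hβ.le).symm,
      ← Real.sqrt_mul (sq_nonneg β)]
    congr 1
    field_simp; ring
    rw [Real.sq_sqrt (sq_nonneg β)]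
  have hts : t < s := by nlinarith
  set r : ℝ := (s+1)/(s-1) with hrdef
  have hΛ : (γ/β) ^ (s/(s-1)) = t ^ (r+1) := by
    rw [← ht2, ← Real.rpow_natCast t 2, ← Real.rpow_mul ht0.le]
    congr 1
    rw [hrdef]
    push_cast
    have hne : s - 1 ≠ 0 := sub_ne_zero.mpr hs1.ne'
    field_simp
    ring
  have haux := aux_h s hs1 t ht1
  rw [← hrdef] at haux
  have hβeq : β = s / t := by field_simp [← hβt]; exact hβt
  have htr : t ^ (r+1) = t ^ r * t := Real.rpow_add_one ht0.ne' r
  rw [hΛ, htr, hβeq]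
  have htrpos : 0 < t ^ r := Real.rpow_pos_of_pos ht0 r
  have hexp : t ^ r * t * (s/t - 1) = t ^ r * (s - t) := by field_simp
  rw [hexp, ← hst]
  nlinarith [haux, hst]
lemma Fderiv (β γ : ℝ) (hβ : 0 < β) (hγ : 0 < γ) (h1 : 1 < β * γ) {y : ℝ} (hy : 0 < y) :
    HasDerivAt (fun x => Real.log x +
        ((β*x+1)*(x+γ))/((β*γ-1)*x) * (Real.log (x+γ) - Real.log (β*x+1)))
      ((β*y^2 - γ)/((β*γ-1)*y^2) * (Real.log (y+γ) - Real.log (β*y+1))) y := by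
  have hc : (0:ℝ) < β*γ - 1 := by linarith
  have hA : (0:ℝ) < β*y+1 := by positivity
  have hB : (0:ℝ) < y+γ := by positivity
  have hlog : HasDerivAt Real.log y⁻¹ y := Real.hasDerivAt_log hy.ne'
  have hA' : HasDerivAt (fun x : ℝ => β*x+1) β y := by
    simpa using ((hasDerivAt_id y).const_mul β).add_const 1
  have hB' : HasDerivAt (fun x : ℝ => x+γ) 1 y := (hasDerivAt_id y).add_const γ
  have hn : HasDerivAt (fun x : ℝ => (β*x+1)*(x+γ)) (β*(y+γ) + (β*y+1)*1) y := hA'.mul hB'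
  have hd : HasDerivAt (fun x : ℝ => (β*γ-1)*x) (β*γ-1) y := by
    simpa using (hasDerivAt_id y).const_mul (β*γ-1)
  have hdne : (β*γ-1)*y ≠ 0 := by positivity
  have hQ : HasDerivAt (fun x : ℝ => ((β*x+1)*(x+γ))/((β*γ-1)*x))
      (((β*(y+γ) + (β*y+1)*1) * ((β*γ-1)*y) - (β*y+1)*(y+γ) * (β*γ-1)) / ((β*γ-1)*y)^2) y :=
    hn.div hd hdne
  have hl1 : HasDerivAt (fun x : ℝ => Real.log (x+γ)) (1/(y+γ)) y := hB'.log hB.ne'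
  have hl2 : HasDerivAt (fun x : ℝ => Real.log (β*x+1)) (β/(β*y+1)) y := hA'.log hA.ne'
  have hL : HasDerivAt (fun x : ℝ => Real.log (x+γ) - Real.log (β*x+1))
      (1/(y+γ) - β/(β*y+1)) y := hl1.sub hl2
  have htot := hlog.add (hQ.mul hL)
  refine htot.congr_deriv ?_
  have hyne : y ≠ 0 := hy.ne'
  have hcne : β*γ-1 ≠ 0 := hc.ne'
  field_simp
  ring
set_option maxHeartbeats 1000000 in
lemma key (β γ : ℝ) (hβ : 0 < β) (hγ : 0 < γ) (h1 : 1 < β * γ) (hle : β ≤ γ)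
    (x : ℝ) (hx : 0 < x) (hxΛ : x ≤ (γ/β) ^ (Real.sqrt (β*γ)/(Real.sqrt (β*γ)-1))) :
    (β*γ-1)*x*(Real.sqrt (β*γ)/(Real.sqrt (β*γ)-1) * Real.log (γ/β) - Real.log x)
      ≤ (β*x+1)*(x+γ)*(Real.log (x+γ) - Real.log (β*x+1)) := by
  have hbγ : (0:ℝ) < β*γ := by positivity
  have hdivpos : (0:ℝ) < γ/β := by positivity
  set s : ℝ := Real.sqrt (β*γ) with hsdef
  set x₀ : ℝ := Real.sqrt (γ/β) with hx0def
  set Λ : ℝ := (γ/β) ^ (s/(s-1)) with hΛdef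
  set L : ℝ := s/(s-1) * Real.log (γ/β) with hLdef
  have hγ1 : 1 < γ := by nlinarith
  have hc : (0:ℝ) < β*γ - 1 := by linarith
  have hs2 : s^2 = β*γ := Real.sq_sqrt hbγ.le
  have hx0sq : x₀^2 = γ/β := Real.sq_sqrt hdivpos.le
  have hs0 : 0 < s := Real.sqrt_pos.2 hbγ
  have hx00 : 0 < x₀ := Real.sqrt_pos.2 hdivpos
  have hs1 : 1 < s := by nlinarith
  have hs1' : (0:ℝ) < s - 1 := by linarith
  have hx0s : x₀ * s = γ := by
    rw [hx0def, hsdef, ← Real.sqrt_mul hdivpos.le]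
    rw [show γ/β*(β*γ) = γ^2 by field_simp]
    exact Real.sqrt_sq hγ.le
  have hβx0 : β * x₀ = s := by
    rw [hx0def, hsdef, show β = Real.sqrt (β^2) from (Real.sqrt_sq hβ.le).symm,
      ← Real.sqrt_mul (sq_nonneg β)]
    congr 1
    field_simp; ring
    rw [Real.sq_sqrt (sq_nonneg β)]
  -- x₀ ≤ Λ
  have hone : (1:ℝ) ≤ γ/β := (one_le_div hβ).2 hle
  have hx0Λ : x₀ ≤ Λ := by
    rw [hx0def, hΛdef, Real.sqrt_eq_rpow]
    apply Real.rpow_le_rpow_of_exponent_le hone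
    rw [le_div_iff₀ hs1']
    nlinarith
  -- B-A nonneg on [0, Λ]
  have hBAle : ∀ y : ℝ, 0 ≤ y → y ≤ Λ → β*y+1 ≤ y+γ := by
    intro y hy0 hyΛ
    rcases le_or_gt β 1 with hb | hb
    · nlinarith
    · have := cross β γ hβ hγ h1 hle hb
      rw [← hsdef, ← hΛdef] at this
      nlinarith [mul_le_mul_of_nonneg_right hyΛ (by linarith : (0:ℝ) ≤ β - 1)]
  -- F min
  set F : ℝ → ℝ := fun x => Real.log x +
      ((β*x+1)*(x+γ))/((β*γ-1)*x) * (Real.log (x+γ) - Real.log (β*x+1)) with hFdef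
  set G : ℝ → ℝ := fun y => (β*y^2 - γ)/((β*γ-1)*y^2) * (Real.log (y+γ) - Real.log (β*y+1))
    with hGdef
  have hderiv : ∀ y : ℝ, 0 < y → HasDerivAt F (G y) y := fun y hy => Fderiv β γ hβ hγ h1 hy
  have hlognn : ∀ y : ℝ, 0 < y → y ≤ Λ → 0 ≤ Real.log (y+γ) - Real.log (β*y+1) := by
    intro y hy0 hyΛ
    have := Real.log_le_log (by positivity : (0:ℝ) < β*y+1) (hBAle y hy0.le hyΛ)
    linarith
  have hFmin : F x₀ ≤ F x := by
    rcases le_total x x₀ with hxx | hxx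
    · apply my_le_of_deriv_nonpos hxx (fun y hy => hderiv y (lt_of_lt_of_le hx hy.1))
      intro y hy
      have hy0 : 0 < y := lt_of_lt_of_le hx hy.1
      have hyx0 : y ≤ x₀ := hy.2
      apply mul_nonpos_iff.mpr
      apply Or.inr
      constructor
      · apply div_nonpos_of_nonpos_of_nonneg
        · nlinarith [hx0sq, mul_le_mul_of_nonneg_left hyx0 hy0.le,
            mul_le_mul_of_nonneg_right hyx0 hx00.le]
        · positivity
      · exact hlognn y hy0 (le_trans hyx0 hx0Λ)
    · apply my_le_of_deriv_nonneg hxx (fun y hy => hderiv y (lt_of_lt_of_le hx00 hy.1))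
      intro y hy
      have hy0 : 0 < y := lt_of_lt_of_le hx00 hy.1
      apply mul_nonneg
      · apply div_nonneg
        · nlinarith [hx0sq, mul_le_mul_of_nonneg_left hy.1 hx00.le,
            mul_le_mul_of_nonneg_right hy.1 hy0.le]
        · positivity
      · exact hlognn y hy0 (le_trans hy.2 hxΛ)
  -- F x₀ = L
  have hbx0 : β*x₀+1 = s+1 := by rw [hβx0]
  have hBx0 : x₀+γ = x₀*(s+1) := by rw [← hx0s]; ring
  have hlogx0 : Real.log x₀ = Real.log (γ/β) / 2 := by
    rw [hx0def]; exact Real.log_sqrt hdivpos.le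
  have hFx0 : F x₀ = L := by
    rw [hFdef]
    simp only []
    rw [hbx0, hBx0, Real.log_mul hx00.ne' (by linarith : s+1 ≠ 0)]
    have hcoef : (s+1)*(x₀*(s+1))/((β*γ-1)*x₀) = (s+1)/(s-1) := by
      rw [← hs2]
      rw [div_eq_div_iff (by nlinarith) (by linarith)]
      ring
    rw [hcoef, hLdef]
    have : Real.log (γ/β) = 2 * Real.log x₀ := by rw [hlogx0]; ring
    rw [this]
    field_simp
    ring
  have hLle : L ≤ F x := hFx0 ▸ hFmin
  rw [hFdef] at hLle
  simp only [] at hLle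
  have h2 : L - Real.log x ≤
      ((β*x+1)*(x+γ))/((β*γ-1)*x) * (Real.log (x+γ) - Real.log (β*x+1)) := by linarith
  have h3 := mul_le_mul_of_nonneg_left h2 (by positivity : (0:ℝ) ≤ (β*γ-1)*x)
  calc (β*γ-1)*x*(L - Real.log x)
      ≤ (β*γ-1)*x * (((β*x+1)*(x+γ))/((β*γ-1)*x) * (Real.log (x+γ) - Real.log (β*x+1))) := h3
    _ = (β*x+1)*(x+γ)*(Real.log (x+γ) - Real.log (β*x+1)) := by
        field_simp
set_option maxHeartbeats 1000000 in
theorem stmt_13 (β γ lam : ℝ) (hβ : 0 < β) (hγ : 0 < γ) (h1 : 1 < β * γ) (hle : β ≤ γ)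
    (hlam : 0 < lam)
    (hlamc : lam < (γ / β) ^ (Real.sqrt (β * γ) / (Real.sqrt (β * γ) - 1))) :
    ∃ α : ℝ, α < 1 ∧ ∀ x : ℝ, 0 < x → x ≤ lam →
      (β * γ - 1) * x * Real.log (lam / x) /
          ((β * x + 1) * (x + γ) * Real.log ((x + γ) / (β * x + 1))) ≤ α := by
  have hbγ : (0:ℝ) < β*γ := by positivity
  have hdivpos : (0:ℝ) < γ/β := by positivity
  have hγ1 : 1 < γ := by nlinarith
  have hc : (0:ℝ) < β*γ - 1 := by linarith
  set s : ℝ := Real.sqrt (β*γ) with hsdef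
  set Λ : ℝ := (γ/β) ^ (s/(s-1)) with hΛdef
  set L : ℝ := s/(s-1) * Real.log (γ/β) with hLdef
  have hs2 : s^2 = β*γ := Real.sq_sqrt hbγ.le
  have hs0 : 0 < s := Real.sqrt_pos.2 hbγ
  have hs1 : 1 < s := by nlinarith
  have hΛpos : 0 < Λ := Real.rpow_pos_of_pos hdivpos _
  have hlamΛ : lam < Λ := hlamc
  have hlogL : Real.log lam < L := by
    rw [hLdef, ← Real.log_rpow hdivpos, ← hΛdef]
    exact Real.log_lt_log hlam hlamΛ
  -- strict B > A for y ≤ lam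
  have hBAlt : ∀ y : ℝ, 0 ≤ y → y ≤ lam → β*y+1 < y+γ := by
    intro y hy0 hylam
    rcases le_or_gt β 1 with hb | hb
    · have h2 : β*y ≤ 1*y := mul_le_mul_of_nonneg_right hb hy0
      linarith
    · have hcr := cross β γ hβ hγ h1 hle hb
      rw [← hsdef, ← hΛdef] at hcr
      have h2 : y * (β-1) < Λ * (β-1) := by
        apply mul_lt_mul_of_pos_right _ (by linarith)
        linarith
      have h3 : y * (β-1) = β*y - y := by ring
      linarith
  have hm0 : β*lam+1 < lam+γ := hBAlt lam hlam.le le_rfl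
  have hApos : (0:ℝ) < β*lam+1 := by positivity
  set m : ℝ := Real.log ((lam+γ)/(β*lam+1)) with hmdef
  have hm : 0 < m := Real.log_pos ((one_lt_div hApos).2 hm0)
  have hmeq : m = Real.log (lam+γ) - Real.log (β*lam+1) :=
    Real.log_div (by positivity) hApos.ne'
  set K : ℝ := γ * m with hKdef
  have hK : 0 < K := by positivity
  set sq : ℝ := Real.sqrt lam with hsqdef
  have hsq0 : 0 < sq := Real.sqrt_pos.2 hlam
  set δ : ℝ := min (lam/2) ((K/(4*(β*γ-1)*sq))^2) with hδdef
  have hδpos : 0 < δ := by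
    apply lt_min (by linarith)
    positivity
  have hδlam : δ < lam := lt_of_le_of_lt (min_le_left _ _) (by linarith)
  set α₁ : ℝ := (Real.log lam - Real.log δ)/(L - Real.log δ) with hα₁def
  have hlogδ : Real.log δ < Real.log lam := Real.log_lt_log hδpos hδlam
  have hLδ : 0 < L - Real.log δ := by linarith
  have hα₁lt : α₁ < 1 := (div_lt_one hLδ).2 (by linarith)
  have hα₁0 : 0 ≤ α₁ := by
    apply div_nonneg _ hLδ.le
    linarith
  refine ⟨max (1/2) α₁, max_lt (by norm_num) hα₁lt, ?_⟩
  intro x hx hxlam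
  have hA : (0:ℝ) < β*x+1 := by positivity
  have hB : (0:ℝ) < x+γ := by positivity
  have hBA : β*x+1 < x+γ := hBAlt x hx.le hxlam
  have hlogq : Real.log ((x+γ)/(β*x+1)) = Real.log (x+γ) - Real.log (β*x+1) :=
    Real.log_div hB.ne' hA.ne'
  have hloglamx : Real.log (lam/x) = Real.log lam - Real.log x :=
    Real.log_div hlam.ne' hx.ne'
  have hlogxle : Real.log x ≤ Real.log lam := Real.log_le_log hx hxlam
  have hNnn : 0 ≤ (β*γ-1)*x*(Real.log lam - Real.log x) := by
    apply mul_nonneg (by positivity)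
    linarith
  rw [hlogq, hloglamx]
  -- lower bound for the log in denominator: ≥ m
  have hmle : m ≤ Real.log (x+γ) - Real.log (β*x+1) := by
    have hmul : (lam+γ)*(β*x+1) ≤ (x+γ)*(β*lam+1) := by
      have hid : (x+γ)*(β*lam+1) - (lam+γ)*(β*x+1) = (lam-x)*(β*γ-1) := by ring
      have hnn := mul_nonneg (sub_nonneg.2 hxlam) hc.le
      linarith
    have := Real.log_le_log (by positivity) hmul
    rw [Real.log_mul (by positivity : (lam+γ) ≠ 0) hA.ne',
        Real.log_mul hB.ne' hApos.ne'] at this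
    linarith
  rcases le_or_gt x δ with hxδ | hxδ
  · -- small x : bound by 1/2
    have hABγ : γ ≤ (β*x+1)*(x+γ) := by
      have hid : (β*x+1)*(x+γ) = β*x*x + β*γ*x + x + γ := by ring
      have p1 : (0:ℝ) ≤ β*x*x := by positivity
      have p2 : (0:ℝ) ≤ β*γ*x := by positivity
      linarith
    have hKD : K ≤ (β*x+1)*(x+γ)*(Real.log (x+γ) - Real.log (β*x+1)) := by
      rw [hKdef]
      apply mul_le_mul hABγ hmle hm.le (by positivity)
    -- numerator ≤ K/2
    have hlamx : (0:ℝ) < lam/x := by positivity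
    have hsqrtx : Real.sqrt x ≤ K/(4*(β*γ-1)*sq) := by
      have h2 : x ≤ (K/(4*(β*γ-1)*sq))^2 := le_trans hxδ (min_le_right _ _)
      have := Real.sqrt_le_sqrt h2
      rwa [Real.sqrt_sq (by positivity)] at this
    have hlogbound : Real.log lam - Real.log x ≤ 2 * Real.sqrt (lam/x) := by
      have h3 : Real.log (Real.sqrt (lam/x)) = Real.log (lam/x) / 2 :=
        Real.log_sqrt hlamx.le
      have h4 : Real.log (Real.sqrt (lam/x)) ≤ Real.sqrt (lam/x) - 1 :=
        Real.log_le_sub_one_of_pos (Real.sqrt_pos.2 hlamx)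
      have h5 : (0:ℝ) ≤ Real.sqrt (lam/x) := Real.sqrt_nonneg _
      rw [← hloglamx]
      linarith
    have hxsq : x * Real.sqrt (lam/x) = sq * Real.sqrt x := by
      rw [Real.sqrt_div hlam.le, hsqdef]
      rw [div_eq_mul_inv, ← mul_assoc, mul_comm x, mul_assoc]
      congr 1
      rw [← div_eq_mul_inv, Real.div_sqrt]
    have hNle : (β*γ-1)*x*(Real.log lam - Real.log x) ≤ K/2 := by
      have h6 : (β*γ-1)*x*(Real.log lam - Real.log x)
          ≤ (β*γ-1)*x*(2*Real.sqrt (lam/x)) :=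
        mul_le_mul_of_nonneg_left hlogbound (by positivity)
      have h7 : (β*γ-1)*x*(2*Real.sqrt (lam/x)) = 2*(β*γ-1)*(sq * Real.sqrt x) := by
        rw [show (β*γ-1)*x*(2*Real.sqrt (lam/x)) = 2*(β*γ-1)*(x*Real.sqrt (lam/x)) by ring,
          hxsq]
      have h8 : 2*(β*γ-1)*(sq * Real.sqrt x) ≤ 2*(β*γ-1)*(sq * (K/(4*(β*γ-1)*sq))) := by
        apply mul_le_mul_of_nonneg_left _ (by positivity)
        exact mul_le_mul_of_nonneg_left hsqrtx hsq0.le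
      have h9 : 2*(β*γ-1)*(sq * (K/(4*(β*γ-1)*sq))) = K/2 := by
        field_simp
        ring
      linarith
    have : (β*γ-1)*x*(Real.log lam - Real.log x) /
        ((β*x+1)*(x+γ)*(Real.log (x+γ) - Real.log (β*x+1))) ≤ (K/2)/K := by
      apply div_le_div₀ (by positivity) hNle hK hKD
    have hhalf : (K/2)/K = 1/2 := by field_simp
    rw [hhalf] at this
    exact le_trans this (le_max_left _ _)
  · -- large x : bound by α₁
    have hxΛ : x ≤ Λ := le_trans hxlam hlamΛ.le
    have hkey := key β γ hβ hγ h1 hle x hx (by rw [← hsdef, ← hΛdef] at *; exact hxΛ)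
    rw [← hsdef, ← hLdef] at hkey
    have hb : 0 < L - Real.log x := by linarith
    have hd₀ : 0 < (β*γ-1)*x*(L - Real.log x) := by
      apply mul_pos (by positivity) hb
    have hDpos : 0 < (β*x+1)*(x+γ)*(Real.log (x+γ) - Real.log (β*x+1)) :=
      lt_of_lt_of_le hd₀ hkey
    rw [div_le_iff₀ hDpos]
    have hlogδx : Real.log δ ≤ Real.log x := (Real.log_le_log hδpos hxδ.le)
    -- a/b ≤ α₁ where a = log lam - log x, b = L - log x
    have hratio : (Real.log lam - Real.log x)/(L - Real.log x) ≤ α₁ := by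
      rw [hα₁def, div_le_div_iff₀ hb hLδ]
      have hid : (Real.log lam - Real.log δ)*(L - Real.log x)
          - (Real.log lam - Real.log x)*(L - Real.log δ)
          = (Real.log x - Real.log δ)*(L - Real.log lam) := by ring
      have hnn := mul_nonneg (sub_nonneg.2 hlogδx)
        (by linarith : (0:ℝ) ≤ L - Real.log lam)
      linarith
    calc (β*γ-1)*x*(Real.log lam - Real.log x)
        = (Real.log lam - Real.log x)/(L - Real.log x) * ((β*γ-1)*x*(L - Real.log x)) := by
          field_simp
      _ ≤ α₁ * ((β*γ-1)*x*(L - Real.log x)) :=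
          mul_le_mul_of_nonneg_right hratio hd₀.le
      _ ≤ α₁ * ((β*x+1)*(x+γ)*(Real.log (x+γ) - Real.log (β*x+1))) :=
          mul_le_mul_of_nonneg_left hkey hα₁0
      _ ≤ max (1/2) α₁ * ((β*x+1)*(x+γ)*(Real.log (x+γ) - Real.log (β*x+1))) :=
          mul_le_mul_of_nonneg_right (le_max_right _ _) hDpos.le
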